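/- arXiv:0812.2839 — 4 statements merged into one kernel-verified Lean document; each statement's English description precedes it below -/
import Mathlib

section
/- Let $Y$ be a nonnegative integrable random variable with quantile function $Q_Y$ (the cadlag inverse of $x \mapsto \mathbb{P}(Y > x)$). Then for any $\alpha \in [0,1]$, $\int_0^{\infty} \min(\sqrt{\alpha}, \sqrt{\mathbb{P}(Y>t)})\,dt = \int_0^{\sqrt{\alpha}} Q_Y(u^2)\,du = \tfrac{1}{2}\int_0^{\alpha} \frac{Q_Y(u)}{\sqrt{u}}\,du$. -/
open MeasureTheory Set
open scoped ENNReal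

theorem min_sqrt_tail_integral_eq_quantile_integrals
    {Ω : Type*} [MeasurableSpace Ω] (μ : Measure Ω) [IsProbabilityMeasure μ]
    (Y : Ω → ℝ) (hYpos : ∀ ω, 0 ≤ Y ω) (hYmeas : Measurable Y)
    (hYint : Integrable Y μ)
    (Q : ℝ → ℝ)
    (hQ : ∀ u, Q u = sInf {x : ℝ | 0 ≤ x ∧ (μ {ω | Y ω > x}).toReal ≤ u})
    (α : ℝ) (hα : α ∈ Icc (0:ℝ) 1) :
    ((∫ t in Ioi (0:ℝ), min (Real.sqrt α) (Real.sqrt ((μ {ω | Y ω > t}).toReal))) =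
        (∫ u in Ioo (0:ℝ) (Real.sqrt α), Q (u ^ 2))) ∧
      ((∫ u in Ioo (0:ℝ) (Real.sqrt α), Q (u ^ 2)) =
        (1 / 2) * ∫ u in Ioo (0:ℝ) α, Q u / Real.sqrt u) := by
  obtain ⟨hα0, hα1⟩ := hα
  set F : ℝ → ℝ := fun t => (μ {ω | Y ω > t}).toReal with hFdef
  have hfin : ∀ t, μ {ω | Y ω > t} ≠ ⊤ := fun t => measure_ne_top μ _
  have hFanti : Antitone F := by
    intro s t hst
    exact ENNReal.toReal_mono (hfin s)
      (measure_mono (fun ω hω => lt_of_le_of_lt hst hω))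
  have hFnonneg : ∀ t, 0 ≤ F t := fun t => ENNReal.toReal_nonneg
  have hFmeas : Measurable F := hFanti.measurable
  -- right continuity
  have hrc : ∀ t v, v < F t → ∃ ε > (0:ℝ), v < F (t + ε) := by
    intro t v hv
    by_contra h
    push_neg at h
    have hv0 : 0 ≤ v := le_trans (hFnonneg (t + 1)) (h 1 one_pos)
    have hsub : {ω | Y ω > t} = ⋃ n : ℕ, {ω | Y ω > t + 1 / (n + 1)} := by
      ext ω
      simp only [mem_iUnion, mem_setOf_eq]
      constructor
      · intro hω
        obtain ⟨n, hn⟩ := exists_nat_one_div_lt (sub_pos.2 hω)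
        exact ⟨n, by push_cast at hn ⊢; linarith⟩
      · rintro ⟨n, hn⟩
        have h0 : (0:ℝ) < 1 / (n + 1) := by positivity
        linarith
    have hdir : Directed (· ⊆ ·) (fun n : ℕ => {ω | Y ω > t + 1 / (n + 1)}) := by
      apply Monotone.directed_le
      intro m n hmn ω hω
      simp only [mem_setOf_eq] at *
      have h1 : (1:ℝ) / (n + 1) ≤ 1 / (m + 1) := by
        gcongr <;> exact_mod_cast hmn
      linarith
    have hle : ∀ n : ℕ, μ {ω | Y ω > t + 1 / (n + 1)} ≤ ENNReal.ofReal v := by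
      intro n
      exact (ENNReal.le_ofReal_iff_toReal_le (hfin _) hv0).2 (h (1 / (n + 1)) (by positivity))
    have hμle : μ {ω | Y ω > t} ≤ ENNReal.ofReal v := by
      rw [hsub, hdir.measure_iUnion]
      exact iSup_le hle
    have hFle : F t ≤ v := by
      have h2 := ENNReal.toReal_mono ENNReal.ofReal_ne_top hμle
      rwa [ENNReal.toReal_ofReal hv0] at h2
    linarith
  -- the sets defining Q are nonempty for positive levels
  have hSne : ∀ v : ℝ, 0 < v → {x : ℝ | 0 ≤ x ∧ F x ≤ v}.Nonempty := by
    intro v hv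
    have hanti : Antitone (fun n : ℕ => {ω | Y ω > (n:ℝ)}) := by
      intro m n hmn ω hω
      simp only [mem_setOf_eq] at hω ⊢
      exact lt_of_le_of_lt (Nat.cast_le.2 hmn) hω
    have hiInter : (⋂ n : ℕ, {ω | Y ω > (n:ℝ)}) = (∅ : Set Ω) := by
      ext ω
      simp only [mem_iInter, mem_setOf_eq, mem_empty_iff_false, iff_false, not_forall, not_lt]
      obtain ⟨n, hn⟩ := exists_nat_gt (Y ω)
      exact ⟨n, hn.le⟩
    have hmeasn : ∀ n : ℕ, NullMeasurableSet {ω | Y ω > (n:ℝ)} μ := fun n =>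
      (hYmeas measurableSet_Ioi).nullMeasurableSet
    have htend := tendsto_measure_iInter_atTop (s := fun n : ℕ => {ω | Y ω > (n:ℝ)})
      hmeasn hanti ⟨0, measure_ne_top μ _⟩
    rw [hiInter, measure_empty] at htend
    have hev : ∀ᶠ n : ℕ in Filter.atTop, μ {ω | Y ω > (n:ℝ)} < ENNReal.ofReal v := by
      exact htend.eventually_lt_const (ENNReal.ofReal_pos.2 hv)
    obtain ⟨n, hn⟩ := hev.exists
    refine ⟨n, Nat.cast_nonneg n, ?_⟩
    have h2 := ENNReal.toReal_mono ENNReal.ofReal_ne_top hn.le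
    rwa [ENNReal.toReal_ofReal hv.le] at h2
  have hQnn : ∀ v : ℝ, 0 < v → 0 ≤ Q v := by
    intro v hv
    rw [hQ]
    exact le_csInf (hSne v hv) (fun b hb => hb.1)
  -- key inversion equivalence
  have hkey : ∀ t : ℝ, 0 ≤ t → ∀ v : ℝ, 0 < v → (t < Q v ↔ v < F t) := by
    intro t ht v hv
    constructor
    · intro h
      by_contra hc
      push_neg at hc
      have hQle : Q v ≤ t := by
        rw [hQ]
        exact csInf_le ⟨0, fun b hb => hb.1⟩ ⟨ht, hc⟩
      linarith
    · intro h
      obtain ⟨ε, hε, hε'⟩ := hrc t v h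
      have hge : t + ε ≤ Q v := by
        rw [hQ]
        refine le_csInf (hSne v hv) ?_
        intro b hb
        by_contra hbc
        push_neg at hbc
        have h2 := hFanti hbc.le
        have := hb.2
        linarith
      linarith
  -- the product set
  set A : Set (ℝ × ℝ) := {p : ℝ × ℝ | p.2 ^ 2 < F p.1} with hAdef
  have hAm : MeasurableSet A :=
    measurableSet_lt (by fun_prop) (hFmeas.comp measurable_fst)
  have hindm : Measurable (A.indicator (1 : ℝ × ℝ → ℝ≥0∞)) := measurable_one.indicator hAm
  -- inner integral in u
  have hB : ∀ t : ℝ,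
      (∫⁻ u in Ioo (0:ℝ) (Real.sqrt α), A.indicator 1 (t, u)) =
        ENNReal.ofReal (min (Real.sqrt α) (Real.sqrt (F t))) := by
    intro t
    have h1 : ∀ u : ℝ, (A.indicator 1 (t, u) : ℝ≥0∞) = {u : ℝ | u ^ 2 < F t}.indicator 1 u := by
      intro u
      by_cases h : u ^ 2 < F t <;>
        simp [hAdef, Set.indicator, h]
    simp_rw [h1]
    have hBm : MeasurableSet {u : ℝ | u ^ 2 < F t} :=
      measurableSet_lt (by fun_prop) measurable_const
    rw [lintegral_indicator_one hBm, Measure.restrict_apply hBm]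
    have hset : {u : ℝ | u ^ 2 < F t} ∩ Ioo 0 (Real.sqrt α) =
        Ioo 0 (min (Real.sqrt α) (Real.sqrt (F t))) := by
      ext u
      simp only [mem_inter_iff, mem_setOf_eq, mem_Ioo, lt_min_iff]
      constructor
      · rintro ⟨h1, h2, h3⟩
        exact ⟨h2, h3, (Real.lt_sqrt h2.le).2 h1⟩
      · rintro ⟨h2, h3, h4⟩
        exact ⟨(Real.lt_sqrt h2.le).1 h4, h2, h3⟩
    rw [hset, Real.volume_Ioo, sub_zero]
  -- inner integral in t
  have hD : ∀ u ∈ Ioo (0:ℝ) (Real.sqrt α),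
      (∫⁻ t in Ioi (0:ℝ), A.indicator 1 (t, u)) = ENNReal.ofReal (Q (u ^ 2)) := by
    intro u hu
    have hu2 : 0 < u ^ 2 := pow_pos hu.1 2
    have h1 : ∀ t : ℝ, (A.indicator 1 (t, u) : ℝ≥0∞) = {t : ℝ | u ^ 2 < F t}.indicator 1 t := by
      intro t
      by_cases h : u ^ 2 < F t <;> simp [hAdef, Set.indicator, h]
    simp_rw [h1]
    have hBm : MeasurableSet {t : ℝ | u ^ 2 < F t} := measurableSet_lt measurable_const hFmeas
    rw [lintegral_indicator_one hBm, Measure.restrict_apply hBm]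
    have hset : {t : ℝ | u ^ 2 < F t} ∩ Ioi 0 = Ioo 0 (Q (u ^ 2)) := by
      ext t
      simp only [mem_inter_iff, mem_setOf_eq, mem_Ioi, mem_Ioo]
      constructor
      · rintro ⟨h1, h2⟩
        exact ⟨h2, (hkey t h2.le _ hu2).2 h1⟩
      · rintro ⟨h2, h3⟩
        exact ⟨(hkey t h2.le _ hu2).1 h3, h2⟩
    rw [hset, Real.volume_Ioo, sub_zero]
  -- Tonelli
  have hunc : AEMeasurable (Function.uncurry fun t u => A.indicator (1 : ℝ × ℝ → ℝ≥0∞) (t, u))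
      (((volume : Measure ℝ).restrict (Ioi 0)).prod
        ((volume : Measure ℝ).restrict (Ioo 0 (Real.sqrt α)))) := by
    exact hindm.aemeasurable
  have hswap :
      (∫⁻ t in Ioi (0:ℝ), ∫⁻ u in Ioo (0:ℝ) (Real.sqrt α), A.indicator 1 (t, u)) =
        ∫⁻ u in Ioo (0:ℝ) (Real.sqrt α), ∫⁻ t in Ioi (0:ℝ), A.indicator 1 (t, u) :=
    lintegral_lintegral_swap hunc
  -- left side as lintegral
  have hL : (∫ t in Ioi (0:ℝ), min (Real.sqrt α) (Real.sqrt (F t))) =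
      (∫⁻ t in Ioi (0:ℝ), ENNReal.ofReal (min (Real.sqrt α) (Real.sqrt (F t)))).toReal := by
    apply integral_eq_lintegral_of_nonneg_ae
    · exact Filter.Eventually.of_forall fun t => le_min (Real.sqrt_nonneg _) (Real.sqrt_nonneg _)
    · exact (measurable_const.min (Real.continuous_sqrt.measurable.comp hFmeas)).aestronglyMeasurable
  -- measurability of the inner lintegral as a function of u
  have hgm : Measurable fun u : ℝ => ∫⁻ t in Ioi (0:ℝ), A.indicator 1 (t, u) := by
    apply Measurable.lintegral_prod_right
    exact hindm.comp measurable_swap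
  have hQeq : ∀ u ∈ Ioo (0:ℝ) (Real.sqrt α),
      Q (u ^ 2) = (∫⁻ t in Ioi (0:ℝ), A.indicator 1 (t, u)).toReal := by
    intro u hu
    rw [hD u hu, ENNReal.toReal_ofReal (hQnn _ (pow_pos hu.1 2))]
  have hR : (∫ u in Ioo (0:ℝ) (Real.sqrt α), Q (u ^ 2)) =
      (∫⁻ u in Ioo (0:ℝ) (Real.sqrt α), ENNReal.ofReal (Q (u ^ 2))).toReal := by
    apply integral_eq_lintegral_of_nonneg_ae
    · filter_upwards [ae_restrict_mem measurableSet_Ioo] with u hu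
      exact hQnn _ (pow_pos hu.1 2)
    · apply (hgm.ennreal_toReal.aestronglyMeasurable).congr
      filter_upwards [ae_restrict_mem measurableSet_Ioo] with u hu
      exact (hQeq u hu).symm
  have hLl : (∫⁻ t in Ioi (0:ℝ), ENNReal.ofReal (min (Real.sqrt α) (Real.sqrt (F t)))) =
      ∫⁻ t in Ioi (0:ℝ), ∫⁻ u in Ioo (0:ℝ) (Real.sqrt α), A.indicator 1 (t, u) :=
    lintegral_congr fun t => (hB t).symm
  have hRl : (∫⁻ u in Ioo (0:ℝ) (Real.sqrt α), ENNReal.ofReal (Q (u ^ 2))) =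
      ∫⁻ u in Ioo (0:ℝ) (Real.sqrt α), ∫⁻ t in Ioi (0:ℝ), A.indicator 1 (t, u) :=
    setLIntegral_congr_fun measurableSet_Ioo
      (fun u hu => (hD u hu).symm)
  have hfirst : (∫ t in Ioi (0:ℝ), min (Real.sqrt α) (Real.sqrt (F t))) =
      ∫ u in Ioo (0:ℝ) (Real.sqrt α), Q (u ^ 2) := by
    rw [hL, hR, hLl, hRl, hswap]
  -- second equality: change of variables
  have himg : (fun x : ℝ => x ^ 2) '' Ioo 0 (Real.sqrt α) = Ioo 0 α := by
    ext y
    simp only [mem_image, mem_Ioo]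
    constructor
    · rintro ⟨x, ⟨hx0, hx1⟩, rfl⟩
      exact ⟨by positivity, (Real.lt_sqrt hx0.le).1 hx1⟩
    · rintro ⟨hy0, hy1⟩
      exact ⟨Real.sqrt y, ⟨Real.sqrt_pos.2 hy0, Real.sqrt_lt_sqrt hy0.le hy1⟩,
        Real.sq_sqrt hy0.le⟩
  have hderiv : ∀ x ∈ Ioo (0:ℝ) (Real.sqrt α),
      HasDerivWithinAt (fun x : ℝ => x ^ 2) (2 * x) (Ioo 0 (Real.sqrt α)) x := by
    intro x hx
    simpa using (hasDerivAt_pow 2 x).hasDerivWithinAt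
  have hinj : InjOn (fun x : ℝ => x ^ 2) (Ioo 0 (Real.sqrt α)) := by
    intro a ha b hb h
    simp only at h
    nlinarith [ha.1, hb.1]
  have hcov := integral_image_eq_integral_abs_deriv_smul measurableSet_Ioo hderiv hinj
    (fun u => Q u / Real.sqrt u)
  rw [himg] at hcov
  have hcong : (∫ x in Ioo (0:ℝ) (Real.sqrt α), |2 * x| • (Q (x ^ 2) / Real.sqrt (x ^ 2))) =
      ∫ x in Ioo (0:ℝ) (Real.sqrt α), 2 * Q (x ^ 2) := by
    apply setIntegral_congr_fun measurableSet_Ioo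
    intro x hx
    have hx0 : 0 < x := hx.1
    show |2 * x| • (Q (x ^ 2) / Real.sqrt (x ^ 2)) = 2 * Q (x ^ 2)
    rw [Real.sqrt_sq hx0.le, abs_of_pos (by linarith), smul_eq_mul]
    field_simp
  rw [hcong, integral_const_mul] at hcov
  exact ⟨hfirst, by linarith⟩
end

section
/- Let $(\tilde\alpha(k))_{k\ge 1}$ be a sequence in $[0,1]$ and $Y$ a nonnegative integrable random variable with quantile function $Q_Y$. Then $\sum_{k\ge 1} k^{-1/2} \int_0^{\tilde\alpha(k)} \frac{Q_Y(u)}{\sqrt{u}}\,du < \infty$ if and only if $\sum_{k\ge 1} k^{-1/2} \int_0^{\infty} \min(\sqrt{\tilde\alpha(k)}, \sqrt{\mathbb{P}(Y>t)})\,dt < \infty$. -/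
open MeasureTheory Set Filter

namespace QuantileAux

noncomputable def QF (H : ℝ → ℝ) (u : ℝ) : ℝ := sInf {x : ℝ | 0 ≤ x ∧ H x ≤ u}

lemma QF_nonneg (H : ℝ → ℝ) (u : ℝ) : 0 ≤ QF H u := by
  rcases eq_empty_or_nonempty {x : ℝ | 0 ≤ x ∧ H x ≤ u} with h | h
  · simp [QF, h, Real.sInf_empty]
  · exact le_csInf h fun b hb => hb.1

lemma QF_bddBelow (H : ℝ → ℝ) (u : ℝ) : BddBelow {x : ℝ | 0 ≤ x ∧ H x ≤ u} :=
  ⟨0, fun b hb => hb.1⟩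

section Main

variable {H : ℝ → ℝ} (hmono : Antitone H) (h0 : ∀ t, 0 ≤ H t)
  (hrc : ∀ x u, (∀ ε > (0:ℝ), H (x + ε) ≤ u) → H x ≤ u)
  (hsm : ∀ u > (0:ℝ), ∃ t, 0 ≤ t ∧ H t ≤ u)

include hmono hrc hsm in
lemma QF_mem {u : ℝ} (hu : 0 < u) : H (QF H u) ≤ u := by
  obtain ⟨t, ht0, htu⟩ := hsm u hu
  have hne : {x : ℝ | 0 ≤ x ∧ H x ≤ u}.Nonempty := ⟨t, ht0, htu⟩
  refine hrc _ _ fun ε hε => ?_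
  obtain ⟨x, hx, hxlt⟩ := exists_lt_of_csInf_lt hne (lt_add_of_pos_right _ hε)
  exact le_trans (hmono hxlt.le) hx.2

include hmono hrc hsm in
lemma set_eq {u : ℝ} (hu : 0 < u) : {t : ℝ | u < H t} ∩ Ioi 0 = Ioo 0 (QF H u) := by
  have hQmem : H (QF H u) ≤ u := QF_mem hmono hrc hsm hu
  ext t
  simp only [mem_inter_iff, mem_setOf_eq, mem_Ioi, mem_Ioo]
  constructor
  · rintro ⟨hut, ht⟩
    refine ⟨ht, ?_⟩
    by_contra hle
    push_neg at hle
    exact absurd (le_trans (hmono hle) hQmem) (not_le.2 hut)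
  · rintro ⟨ht, htQ⟩
    refine ⟨?_, ht⟩
    by_contra hle
    push_neg at hle
    have : t ∈ {x : ℝ | 0 ≤ x ∧ H x ≤ u} := ⟨ht.le, hle⟩
    exact absurd (csInf_le (QF_bddBelow H u) this) (not_le.2 htQ)

include hsm in
lemma QF_antitoneOn : ∀ u v : ℝ, 0 < u → u ≤ v → QF H v ≤ QF H u := by
  intro u v hu huv
  obtain ⟨t, ht0, htu⟩ := hsm u hu
  exact csInf_le_csInf (QF_bddBelow H v) ⟨t, ht0, htu⟩
    (fun x hx => ⟨hx.1, hx.2.trans huv⟩)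

include h0 hsm in
lemma QF_measurable : Measurable (QF H) := by
  apply measurable_of_Iio
  intro c
  have hdecomp : QF H ⁻¹' Iio c =
      (QF H ⁻¹' Iio c ∩ Iio 0) ∪ (QF H ⁻¹' Iio c ∩ {0}) ∪ (QF H ⁻¹' Iio c ∩ Ioi 0) := by
    rw [← inter_union_distrib_left, ← inter_union_distrib_left]
    have : Iio (0:ℝ) ∪ {0} ∪ Ioi 0 = univ := by
      ext x; simp only [mem_union, mem_Iio, mem_singleton_iff, mem_Ioi, mem_univ, iff_true]
      rcases lt_trichotomy x 0 with h | h | h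
      exacts [Or.inl (Or.inl h), Or.inl (Or.inr h), Or.inr h]
    rw [this, inter_univ]
  rw [hdecomp]
  refine ((MeasurableSet.union ?_ ?_).union ?_)
  · have heq : QF H ⁻¹' Iio c ∩ Iio 0 = if 0 < c then Iio 0 else ∅ := by
      split_ifs with hc
      · refine inter_eq_right.2 fun x hx => ?_
        have hx' : x < 0 := hx
        have hempty : {y : ℝ | 0 ≤ y ∧ H y ≤ x} = ∅ := by
          ext y; simp only [mem_setOf_eq, mem_empty_iff_false, iff_false, not_and, not_le]
          intro hy; exact lt_of_lt_of_le hx' (h0 y)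
        simp only [mem_preimage, mem_Iio, QF, hempty, Real.sInf_empty]
        exact hc
      · refine eq_empty_of_forall_notMem fun x hx => ?_
        exact hc (lt_of_le_of_lt (QF_nonneg H x) hx.1)
    rw [heq]; split_ifs
    · exact measurableSet_Iio
    · exact MeasurableSet.empty
  · exact Set.Subsingleton.measurableSet
      (fun x hx y hy => hx.2.trans hy.2.symm)
  · refine OrdConnected.measurableSet ⟨fun x hx y hy z hz => ?_⟩
    have hx0 : (0:ℝ) < x := hx.2
    have hz0 : (0:ℝ) < z := lt_of_lt_of_le hx0 hz.1
    exact ⟨lt_of_le_of_lt (QF_antitoneOn hsm x z hx0 hz.1) hx.1, hz0⟩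

lemma sqrt_layer {x : ℝ} (hx : 0 ≤ x) :
    ∫⁻ u in Ioo (0:ℝ) x, ENNReal.ofReal ((1/2) * u ^ (-(1/2) : ℝ)) =
      ENNReal.ofReal (Real.sqrt x) := by
  have hint : IntegrableOn (fun u : ℝ => (1/2) * u ^ (-(1/2) : ℝ)) (Ioo 0 x) := by
    have h1 : IntervalIntegrable (fun u : ℝ => u ^ (-(1/2) : ℝ)) volume 0 x :=
      intervalIntegral.intervalIntegrable_rpow' (by norm_num)
    have h2 : IntegrableOn (fun u : ℝ => u ^ (-(1/2) : ℝ)) (Ioc 0 x) :=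
      (intervalIntegrable_iff_integrableOn_Ioc_of_le hx).1 h1
    exact (h2.mono_set Ioo_subset_Ioc_self).const_mul _
  have hnonneg : 0 ≤ᶠ[ae (volume.restrict (Ioo (0:ℝ) x))]
      fun u : ℝ => (1/2) * u ^ (-(1/2) : ℝ) := by
    refine (ae_restrict_iff' measurableSet_Ioo).2 (ae_of_all _ fun u hu => ?_)
    have : (0:ℝ) ≤ u ^ (-(1/2) : ℝ) := Real.rpow_nonneg hu.1.le _
    simp only [Pi.zero_apply]
    linarith
  rw [← ofReal_integral_eq_lintegral_ofReal hint hnonneg]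
  congr 1
  have hIoo : ∫ u in Ioo (0:ℝ) x, (1/2) * u ^ (-(1/2) : ℝ) =
      ∫ u in (0:ℝ)..x, (1/2) * u ^ (-(1/2) : ℝ) := by
    rw [intervalIntegral.integral_of_le hx, integral_Ioc_eq_integral_Ioo]
  have h12 : (-(1/2) : ℝ) + 1 = 1/2 := by norm_num
  rw [hIoo, intervalIntegral.integral_const_mul, integral_rpow (Or.inl (by norm_num)),
    h12, Real.zero_rpow (by norm_num : (1/2:ℝ) ≠ 0), Real.sqrt_eq_rpow]
  ring

include hmono h0 hrc hsm in
lemma key_identity {a : ℝ} (ha : 0 ≤ a) :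
    ∫ t in Ioi (0:ℝ), min (Real.sqrt a) (Real.sqrt (H t)) =
      (1/2) * ∫ u in Ioo (0:ℝ) a, QF H u / Real.sqrt u := by
  have hHm : Measurable H := hmono.measurable
  have hQm : Measurable (QF H) := QF_measurable h0 hsm
  have hsqrtmono : Monotone Real.sqrt := fun _ _ h => Real.sqrt_le_sqrt h
  set f : ℝ → ENNReal := fun u => ENNReal.ofReal ((1/2) * u ^ (-(1/2) : ℝ)) with hf
  have hfm : Measurable f := by
    apply ENNReal.measurable_ofReal.comp
    fun_prop
  have hmin : ∀ t, min (Real.sqrt a) (Real.sqrt (H t)) = Real.sqrt (min a (H t)) :=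
    fun t => (hsqrtmono.map_min).symm
  have hL1 : ∫ t in Ioi (0:ℝ), min (Real.sqrt a) (Real.sqrt (H t)) =
      (∫⁻ t in Ioi (0:ℝ), ENNReal.ofReal (Real.sqrt (min a (H t)))).toReal := by
    simp_rw [hmin]
    exact integral_eq_lintegral_of_nonneg_ae (ae_of_all _ fun t => Real.sqrt_nonneg _)
      ((Real.continuous_sqrt.measurable.comp (measurable_const.min hHm)).aestronglyMeasurable)
  have hcalc : ∫⁻ t in Ioi (0:ℝ), ENNReal.ofReal (Real.sqrt (min a (H t))) =
      ENNReal.ofReal (1/2) * ∫⁻ u in Ioo (0:ℝ) a, ENNReal.ofReal (QF H u / Real.sqrt u) := by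
    calc ∫⁻ t in Ioi (0:ℝ), ENNReal.ofReal (Real.sqrt (min a (H t)))
        = ∫⁻ t in Ioi (0:ℝ), ∫⁻ u in Ioo (0:ℝ) a, (Iio (H t)).indicator f u := by
          refine lintegral_congr fun t => ?_
          rw [← sqrt_layer (le_min ha (h0 t))]
          rw [lintegral_indicator measurableSet_Iio,
            Measure.restrict_restrict measurableSet_Iio, inter_comm, Ioo_inter_Iio]
      _ = ∫⁻ u in Ioo (0:ℝ) a, ∫⁻ t in Ioi (0:ℝ), (Iio (H t)).indicator f u := by
          apply lintegral_lintegral_swap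
          have huncurry : Function.uncurry (fun t u => (Iio (H t)).indicator f u) =
              fun p : ℝ × ℝ => ({q : ℝ × ℝ | q.2 < H q.1}).indicator (fun q => f q.2) p := by
            ext p
            by_cases h : p.2 < H p.1 <;>
              simp [Function.uncurry, Set.indicator, h]
          rw [huncurry]
          exact ((hfm.comp measurable_snd).indicator
            (measurableSet_lt measurable_snd (hHm.comp measurable_fst))).aemeasurable
      _ = ∫⁻ u in Ioo (0:ℝ) a, f u * ENNReal.ofReal (QF H u) := by
          refine setLIntegral_congr_fun measurableSet_Ioo (fun u hu => ?_)
          have hind : (fun t => (Iio (H t)).indicator f u) =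
              fun t => ({t' : ℝ | u < H t'}).indicator (fun _ => f u) t := by
            ext t; by_cases h : u < H t <;> simp [Set.indicator, h]
          rw [hind, lintegral_indicator_const
              (show MeasurableSet {t' : ℝ | u < H t'} from hHm measurableSet_Ioi),
            Measure.restrict_apply (show MeasurableSet {t' : ℝ | u < H t'} from hHm measurableSet_Ioi),
            set_eq hmono hrc hsm hu.1, Real.volume_Ioo, sub_zero]
      _ = ∫⁻ u in Ioo (0:ℝ) a, ENNReal.ofReal (1/2) * ENNReal.ofReal (QF H u / Real.sqrt u) := by
          refine setLIntegral_congr_fun measurableSet_Ioo (fun u hu => ?_)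
          have hu0 : (0:ℝ) < u := hu.1
          have hrp : (0:ℝ) ≤ u ^ (-(1/2):ℝ) := Real.rpow_nonneg hu0.le _
          rw [hf]
          simp only
          rw [ENNReal.ofReal_mul (by norm_num : (0:ℝ) ≤ 1/2), mul_assoc,
            ← ENNReal.ofReal_mul hrp]
          congr 2
          rw [Real.sqrt_eq_rpow, Real.rpow_neg hu0.le, inv_mul_eq_div]
      _ = ENNReal.ofReal (1/2) * ∫⁻ u in Ioo (0:ℝ) a, ENNReal.ofReal (QF H u / Real.sqrt u) :=
          lintegral_const_mul' _ _ ENNReal.ofReal_ne_top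
  have hR : ∫ u in Ioo (0:ℝ) a, QF H u / Real.sqrt u =
      (∫⁻ u in Ioo (0:ℝ) a, ENNReal.ofReal (QF H u / Real.sqrt u)).toReal :=
    integral_eq_lintegral_of_nonneg_ae
      (ae_of_all _ fun u => div_nonneg (QF_nonneg H u) (Real.sqrt_nonneg u))
      ((hQm.div Real.continuous_sqrt.measurable).aestronglyMeasurable)
  rw [hL1, hcalc, hR, ENNReal.toReal_mul, ENNReal.toReal_ofReal (by norm_num : (0:ℝ) ≤ 1/2)]

end Main
end QuantileAux

theorem summable_quantile_integral_iff_summable_min_integral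
    {Ω : Type*} [MeasurableSpace Ω] (μ : Measure Ω) [IsProbabilityMeasure μ]
    (Y : Ω → ℝ) (hYpos : ∀ ω, 0 ≤ Y ω) (hYmeas : Measurable Y)
    (hYint : Integrable Y μ)
    (Q : ℝ → ℝ)
    (hQ : ∀ u, Q u = sInf {x : ℝ | 0 ≤ x ∧ (μ {ω | Y ω > x}).toReal ≤ u})
    (α : ℕ → ℝ) (hα : ∀ k, α k ∈ Icc (0:ℝ) 1) :
    Summable (fun k : ℕ =>
        ((k : ℝ) + 1) ^ (-(1/2) : ℝ) * ∫ u in Ioo (0:ℝ) (α k), Q u / Real.sqrt u) ↔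
      Summable (fun k : ℕ =>
        ((k : ℝ) + 1) ^ (-(1/2) : ℝ) *
          ∫ t in Ioi (0:ℝ),
            min (Real.sqrt (α k)) (Real.sqrt ((μ {ω | Y ω > t}).toReal))) := by
  classical
  set H : ℝ → ℝ := fun t => (μ {ω | Y ω > t}).toReal with hH
  have hmono : Antitone H := by
    intro s t hst
    exact ENNReal.toReal_mono (measure_ne_top μ _)
      (measure_mono fun ω h => lt_of_le_of_lt hst h)
  have h0 : ∀ t, 0 ≤ H t := fun t => ENNReal.toReal_nonneg
  have hrc : ∀ x u, (∀ ε > (0:ℝ), H (x + ε) ≤ u) → H x ≤ u := by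
    intro x u h
    have hu0 : 0 ≤ u := le_trans (h0 (x + 1)) (h 1 one_pos)
    have hsets : {ω | Y ω > x} = ⋃ n : ℕ, {ω | Y ω > x + 1/((n:ℝ)+1)} := by
      ext ω
      simp only [mem_setOf_eq, mem_iUnion]
      constructor
      · intro hω
        obtain ⟨n, hn⟩ := exists_nat_one_div_lt (sub_pos.2 hω)
        exact ⟨n, by linarith⟩
      · rintro ⟨n, hn⟩
        have : (0:ℝ) < 1/((n:ℝ)+1) := by positivity
        linarith
    have hmonoS : Monotone (fun n : ℕ => {ω | Y ω > x + 1/((n:ℝ)+1)}) := by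
      intro n m hnm ω hω
      have h1 : (1:ℝ)/((m:ℝ)+1) ≤ 1/((n:ℝ)+1) := by
        apply one_div_le_one_div_of_le (by positivity)
        exact_mod_cast add_le_add_left (Nat.cast_le.2 hnm) 1
      simp only [mem_setOf_eq] at hω ⊢
      linarith
    have htd := tendsto_measure_iUnion_atTop (μ := μ) hmonoS
    rw [← hsets] at htd
    have hle : ∀ n : ℕ, μ {ω | Y ω > x + 1/((n:ℝ)+1)} ≤ ENNReal.ofReal u := fun n =>
      (ENNReal.le_ofReal_iff_toReal_le (measure_ne_top _ _) hu0).2 (h _ (by positivity))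
    have := le_of_tendsto htd (Eventually.of_forall hle)
    exact ENNReal.toReal_le_of_le_ofReal hu0 this
  have hsm : ∀ u > (0:ℝ), ∃ t, 0 ≤ t ∧ H t ≤ u := by
    intro u hu
    have hant : Antitone (fun n : ℕ => {ω | Y ω > (n:ℝ)}) := by
      intro n m hnm ω hω
      exact lt_of_le_of_lt (Nat.cast_le.2 hnm) (show (m:ℝ) < Y ω from hω)
    have hempty : ⋂ n : ℕ, {ω | Y ω > (n:ℝ)} = ∅ := by
      ext ω
      simp only [mem_iInter, mem_setOf_eq, mem_empty_iff_false, iff_false, not_forall, not_lt]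
      obtain ⟨n, hn⟩ := exists_nat_gt (Y ω)
      exact ⟨n, hn.le⟩
    have htd := tendsto_measure_iInter_atTop
      (fun n => (show MeasurableSet {ω | Y ω > ((n:ℕ):ℝ)} from hYmeas measurableSet_Ioi).nullMeasurableSet)
      hant ⟨0, measure_ne_top μ _⟩
    rw [hempty, measure_empty] at htd
    have := htd.eventually_lt_const (ENNReal.ofReal_pos.2 hu)
    obtain ⟨n, hn⟩ := this.exists
    exact ⟨(n:ℝ), Nat.cast_nonneg n, ENNReal.toReal_le_of_le_ofReal hu.le hn.le⟩
  have hQeq : Q = QuantileAux.QF H := funext fun u => hQ u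
  have hkey : (fun k : ℕ =>
      ((k : ℝ) + 1) ^ (-(1/2) : ℝ) *
        ∫ t in Ioi (0:ℝ), min (Real.sqrt (α k)) (Real.sqrt (H t))) =
      fun k : ℕ => (1/2 : ℝ) *
        (((k : ℝ) + 1) ^ (-(1/2) : ℝ) * ∫ u in Ioo (0:ℝ) (α k), Q u / Real.sqrt u) := by
    funext k
    rw [hQeq, QuantileAux.key_identity hmono h0 hrc hsm (hα k).1]
    ring
  rw [hkey, summable_mul_left_iff (by norm_num : (1/2:ℝ) ≠ 0)]
end

section
/- Let $\gamma \in (0,1)$, $a > 0$ with $a < \frac{1}{2} - \gamma$, and let $\nu$ be a probability measure on $(0,1)$ with density $g$ satisfying $g(x) \le V x^{-\gamma}$ for a constant $V > 0$. Let $f : (0,1) \to \mathbb{R}$ be positive, non-increasing, with $f(x) \le D x^{-a}$. Then $\sum_{k \ge 1} k^{-1/2} \int_0^{\infty} \min(k^{-(1-\gamma)/(2\gamma)}, \sqrt{\nu(\{f > t\})})\,dt < \infty$. -/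
open MeasureTheory Set

theorem summable_min_integral_of_intermittent_bounds
    (γ a D V : ℝ) (hγ : γ ∈ Ioo (0:ℝ) 1) (ha : 0 < a) (haγ : a < 1/2 - γ)
    (hD : 0 < D) (hV : 0 < V)
    (g : ℝ → ℝ) (hg : ∀ x ∈ Ioo (0:ℝ) 1, g x ≤ V * x ^ (-γ))
    (ν : Measure ℝ) [IsProbabilityMeasure ν]
    (hν : ν = (volume.restrict (Ioo (0:ℝ) 1)).withDensity (fun x => ENNReal.ofReal (g x)))
    (f : ℝ → ℝ) (hpos : ∀ x ∈ Ioo (0:ℝ) 1, 0 < f x)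
    (hmono : ∀ x ∈ Ioo (0:ℝ) 1, ∀ y ∈ Ioo (0:ℝ) 1, x ≤ y → f y ≤ f x)
    (hbound : ∀ x ∈ Ioo (0:ℝ) 1, f x ≤ D * x ^ (-a)) :
    Summable (fun k : ℕ =>
      ((k : ℝ) + 1) ^ (-(1/2) : ℝ) *
        ∫ t in Ioi (0:ℝ),
          min (((k : ℝ) + 1) ^ (-(1 - γ) / (2 * γ)))
            (Real.sqrt ((ν {x ∈ Ioo (0:ℝ) 1 | f x > t}).toReal))) := by
  obtain ⟨hγ0, hγ1⟩ := hγ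
  set ρ : ℝ := (1 - γ) / (2 * γ) with hρdef
  have hρ : 0 < ρ := div_pos (by linarith) (by linarith)
  set β : ℝ := (1 - γ) / (2 * a) with hβdef
  have hβ1 : 1 < β := (one_lt_div (by linarith)).2 (by linarith)
  have hβ0 : 0 < β := by linarith
  have hC0 : 0 < V / (1 - γ) := div_pos hV (by linarith)
  set C1 : ℝ := Real.sqrt (V / (1 - γ)) * D ^ β with hC1def
  have hC1 : 0 < C1 := mul_pos (Real.sqrt_pos.2 hC0) (Real.rpow_pos_of_pos hD β)
  -- key pointwise measure bound
  have hmeas : ∀ t : ℝ, 0 < t →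
      Real.sqrt ((ν {x ∈ Ioo (0:ℝ) 1 | f x > t}).toReal) ≤ C1 * t ^ (-β) := by
    intro t ht
    set s : ℝ := (D / t) ^ (1 / a) with hsdef
    have hDt : 0 < D / t := div_pos hD ht
    have hs0 : 0 < s := Real.rpow_pos_of_pos hDt _
    set u : ℝ := min 1 s with hudef
    have hu0 : 0 < u := lt_min one_pos hs0
    have hu1 : u ≤ 1 := min_le_left _ _
    have hsub : {x ∈ Ioo (0:ℝ) 1 | f x > t} ⊆ Ioo 0 u := by
      rintro x ⟨hx, hfx⟩
      refine ⟨hx.1, lt_min hx.2 ?_⟩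
      have h1 : t < D * x ^ (-a) := lt_of_lt_of_le hfx (hbound x hx)
      have hxa0 : (0:ℝ) < x ^ a := Real.rpow_pos_of_pos hx.1 a
      have hxa : x ^ a < D / t := by
        rw [Real.rpow_neg hx.1.le] at h1
        rw [lt_div_iff₀ ht]
        calc x ^ a * t < x ^ a * (D * (x ^ a)⁻¹) := (mul_lt_mul_iff_right₀ hxa0).2 h1
          _ = D := by field_simp
      calc x = (x ^ a) ^ (1/a) := by
            rw [← Real.rpow_mul hx.1.le, mul_one_div, div_self ha.ne', Real.rpow_one]
        _ < (D / t) ^ (1/a) := Real.rpow_lt_rpow hxa0.le hxa (by positivity)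
    have hioo : ν (Ioo 0 u) ≤ ENNReal.ofReal (V / (1 - γ) * u ^ (1 - γ)) := by
      rw [hν, withDensity_apply _ measurableSet_Ioo,
        Measure.restrict_restrict measurableSet_Ioo,
        inter_eq_left.2 (Ioo_subset_Ioo le_rfl hu1)]
      have hint : IntegrableOn (fun x : ℝ => V * x ^ (-γ)) (Ioo 0 u) :=
        ((intervalIntegral.integrableOn_Ioo_rpow_iff hu0).2 (by linarith : (-1:ℝ) < -γ)).const_mul V
      calc ∫⁻ x in Ioo 0 u, ENNReal.ofReal (g x)
          ≤ ∫⁻ x in Ioo 0 u, ENNReal.ofReal (V * x ^ (-γ)) := by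
            refine setLIntegral_mono' measurableSet_Ioo fun x hx => ?_
            exact ENNReal.ofReal_le_ofReal (hg x ⟨hx.1, lt_of_lt_of_le hx.2 hu1⟩)
        _ = ENNReal.ofReal (∫ x in Ioo 0 u, V * x ^ (-γ)) := by
            rw [← ofReal_integral_eq_lintegral_ofReal hint]
            filter_upwards [ae_restrict_mem measurableSet_Ioo] with x hx
            exact mul_nonneg hV.le (Real.rpow_nonneg hx.1.le _)
        _ ≤ ENNReal.ofReal (V / (1 - γ) * u ^ (1 - γ)) := by
            apply ENNReal.ofReal_le_ofReal
            rw [integral_const_mul, ← MeasureTheory.integral_Ioc_eq_integral_Ioo,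
              ← intervalIntegral.integral_of_le hu0.le,
              integral_rpow (Or.inl (by linarith : (-1:ℝ) < -γ)),
              Real.zero_rpow (by linarith : (-γ + 1 : ℝ) ≠ 0),
              show (-γ + 1 : ℝ) = 1 - γ by ring, sub_zero]
            exact le_of_eq (by ring)
    have hle2 : (ν {x ∈ Ioo (0:ℝ) 1 | f x > t}).toReal ≤ V / (1 - γ) * s ^ (1 - γ) := by
      have hle : (ν {x ∈ Ioo (0:ℝ) 1 | f x > t}).toReal ≤ V / (1 - γ) * u ^ (1 - γ) := by
        refine ENNReal.toReal_le_of_le_ofReal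
          (mul_nonneg hC0.le (Real.rpow_nonneg hu0.le _)) ?_
        exact le_trans (measure_mono hsub) hioo
      refine hle.trans ?_
      exact mul_le_mul_of_nonneg_left
        (Real.rpow_le_rpow hu0.le (min_le_right _ _) (by linarith)) hC0.le
    calc Real.sqrt ((ν {x ∈ Ioo (0:ℝ) 1 | f x > t}).toReal)
        ≤ Real.sqrt (V / (1 - γ) * s ^ (1 - γ)) := Real.sqrt_le_sqrt hle2
      _ = Real.sqrt (V / (1 - γ)) * Real.sqrt (s ^ (1 - γ)) := Real.sqrt_mul hC0.le _
      _ = C1 * t ^ (-β) := by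
          rw [hC1def, Real.sqrt_eq_rpow (s ^ (1 - γ)),
            ← Real.rpow_mul hs0.le, hsdef, ← Real.rpow_mul hDt.le,
            show 1 / a * ((1 - γ) * (1/2)) = β by rw [hβdef, one_div_mul_eq_div, mul_one_div, div_div],
            Real.div_rpow hD.le ht.le, Real.rpow_neg ht.le]
          ring
  -- exponent arithmetic
  set e : ℝ := -(1/2) + (ρ / β - ρ) with hedef
  have hρβ : ρ / β = a / γ := by
    rw [hρdef, hβdef]
    rw [div_div_div_comm]
    rw [div_self (by linarith : (1 - γ : ℝ) ≠ 0)]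
    rw [one_div_div]
    rw [mul_comm 2 a, mul_comm 2 γ, mul_div_mul_right _ _ (two_ne_zero)]
  have he : e < -1 := by
    have h2γ : (0:ℝ) < 2 * γ := by linarith
    have hmul : (e + 1) * (2 * γ) = 2 * a - 1 + 2 * γ := by
      rw [hedef, hρβ, hρdef]; field_simp; ring
    have hneg : (e + 1) * (2 * γ) < 0 := by rw [hmul]; linarith
    by_contra hcon
    push_neg at hcon
    have : 0 ≤ (e + 1) * (2 * γ) := mul_nonneg (by linarith) h2γ.le
    linarith
  have hsum : Summable (fun k : ℕ => ((k:ℝ) + 1) ^ e) := by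
    have h0 : Summable (fun n : ℕ => (n:ℝ) ^ e) := Real.summable_nat_rpow.2 he
    have h1 := (summable_nat_add_iff (f := fun n : ℕ => (n:ℝ) ^ e) 1).2 h0
    refine h1.congr fun k => ?_
    push_cast
    ring_nf
  refine Summable.of_nonneg_of_le (fun k => ?_) (fun k => ?_)
    (hsum.mul_left (1 + C1 / (β - 1)))
  · apply mul_nonneg (Real.rpow_nonneg (by positivity) _)
    apply integral_nonneg
    intro t
    exact le_min (Real.rpow_nonneg (by positivity) _) (Real.sqrt_nonneg _)
  · have hk1 : (0:ℝ) < (k:ℝ) + 1 := by positivity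
    set M : ℝ := ((k:ℝ) + 1) ^ (-ρ) with hMdef
    have hM0 : 0 < M := Real.rpow_pos_of_pos hk1 _
    set T : ℝ := ((k:ℝ) + 1) ^ (ρ / β) with hTdef
    have hT0 : 0 < T := Real.rpow_pos_of_pos hk1 _
    have hMρ : -(1 - γ) / (2 * γ) = -ρ := by rw [hρdef, neg_div]
    set G : ℝ → ℝ := fun t => min M (C1 * t ^ (-β)) with hGdef
    have hGmeas : Measurable G := by
      rw [hGdef]; fun_prop
    have hi2' : IntegrableOn (fun t : ℝ => C1 * t ^ (-β)) (Ioi T) :=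
      (integrableOn_Ioi_rpow_of_lt (by linarith : -β < -1) hT0).const_mul C1
    have hi1 : IntegrableOn G (Ioc 0 T) := by
      refine Integrable.mono'
        ((integrableOn_const measure_Ioc_lt_top.ne) :
          IntegrableOn (fun _ : ℝ => M) (Ioc 0 T) volume)
        hGmeas.aestronglyMeasurable ?_
      filter_upwards [ae_restrict_mem measurableSet_Ioc] with t htm
      rw [Real.norm_eq_abs, abs_of_nonneg
        (le_min hM0.le (mul_nonneg hC1.le (Real.rpow_nonneg htm.1.le _)))]
      exact min_le_left _ _
    have hi2 : IntegrableOn G (Ioi T) := by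
      refine Integrable.mono' hi2' hGmeas.aestronglyMeasurable ?_
      filter_upwards [ae_restrict_mem measurableSet_Ioi] with t htm
      rw [Real.norm_eq_abs, abs_of_nonneg
        (le_min hM0.le (mul_nonneg hC1.le (Real.rpow_nonneg (hT0.trans htm).le _)))]
      exact min_le_right _ _
    have hunion : Ioc (0:ℝ) T ∪ Ioi T = Ioi 0 := Ioc_union_Ioi_eq_Ioi hT0.le
    have hGint : IntegrableOn G (Ioi 0) := by
      rw [← hunion]; exact hi1.union hi2
    have hIle : (∫ t in Ioi (0:ℝ),
        min (((k : ℝ) + 1) ^ (-(1 - γ) / (2 * γ)))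
          (Real.sqrt ((ν {x ∈ Ioo (0:ℝ) 1 | f x > t}).toReal)))
        ≤ M * T + C1 / (β - 1) * T ^ (1 - β) := by
      have step1 : (∫ t in Ioi (0:ℝ),
          min (((k : ℝ) + 1) ^ (-(1 - γ) / (2 * γ)))
            (Real.sqrt ((ν {x ∈ Ioo (0:ℝ) 1 | f x > t}).toReal)))
          ≤ ∫ t in Ioi (0:ℝ), G t := by
        refine integral_mono_of_nonneg ?_ hGint ?_
        · filter_upwards with t
          exact le_min (Real.rpow_nonneg (by positivity) _) (Real.sqrt_nonneg _)
        · filter_upwards [ae_restrict_mem measurableSet_Ioi] with t htm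
          rw [hMρ]
          exact min_le_min le_rfl (hmeas t htm)
      refine step1.trans ?_
      have hsplit : (∫ t in Ioi (0:ℝ), G t)
          = (∫ t in Ioc (0:ℝ) T, G t) + ∫ t in Ioi T, G t := by
        rw [← hunion, setIntegral_union (Ioc_disjoint_Ioi le_rfl) measurableSet_Ioi hi1 hi2]
      rw [hsplit]
      have hpart1 : (∫ t in Ioc (0:ℝ) T, G t) ≤ M * T := by
        have h := setIntegral_mono_on hi1
          (integrableOn_const measure_Ioc_lt_top.ne)
          measurableSet_Ioc (fun t _ => min_le_left (α := ℝ) M (C1 * t ^ (-β)))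
        refine h.trans ?_
        rw [setIntegral_const, measureReal_def, Real.volume_Ioc, smul_eq_mul,
          ENNReal.toReal_ofReal (by linarith), sub_zero, mul_comm]
      have hpart2 : (∫ t in Ioi T, G t) ≤ C1 / (β - 1) * T ^ (1 - β) := by
        have h := setIntegral_mono_on hi2 hi2'
          measurableSet_Ioi (fun t _ => min_le_right (α := ℝ) M (C1 * t ^ (-β)))
        refine h.trans ?_
        rw [integral_const_mul, integral_Ioi_rpow_of_lt (by linarith : -β < -1) hT0,
          show (-β + 1 : ℝ) = 1 - β by ring]
        have heq : -T ^ (1 - β) / (1 - β) = T ^ (1 - β) / (β - 1) := by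
          rw [div_eq_div_iff (by linarith : (1 - β : ℝ) ≠ 0) (by linarith : (β - 1 : ℝ) ≠ 0)]
          ring
        rw [heq]
        exact le_of_eq (by ring)
      linarith
    have hMT : M * T = ((k:ℝ) + 1) ^ (ρ / β - ρ) := by
      rw [hMdef, hTdef, ← Real.rpow_add hk1]
      ring_nf
    have hT1β : T ^ (1 - β) = ((k:ℝ) + 1) ^ (ρ / β - ρ) := by
      rw [hTdef, ← Real.rpow_mul hk1.le]
      congr 1
      field_simp
    calc ((k:ℝ) + 1) ^ (-(1/2) : ℝ) *
          (∫ t in Ioi (0:ℝ),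
            min (((k : ℝ) + 1) ^ (-(1 - γ) / (2 * γ)))
              (Real.sqrt ((ν {x ∈ Ioo (0:ℝ) 1 | f x > t}).toReal)))
        ≤ ((k:ℝ) + 1) ^ (-(1/2) : ℝ) * (M * T + C1 / (β - 1) * T ^ (1 - β)) :=
          mul_le_mul_of_nonneg_left hIle (Real.rpow_nonneg hk1.le _)
      _ = (1 + C1 / (β - 1)) * ((k:ℝ) + 1) ^ e := by
          rw [hMT, hT1β, hedef, Real.rpow_add hk1]
          ring
end

section
/- Let $(a_k)_{k\ge 0}$ be nonnegative reals and $\varepsilon_0$ a random variable in $L^r$ for some $r > 2$. If $\sum_{k\ge 0} k^{1/(r-1)} a_k^{(r-2)/(r-1)} < \infty$, then $\sum_{k\ge 0} \int_0^{a_k^2} \frac{Q_{|\varepsilon_0|}(u)}{\sqrt{u}}\,du < \infty$. -/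
open MeasureTheory Set

lemma aux_bern {c S : ℝ} (hc : 1 ≤ c) (hS : 0 ≤ S) :
    (S + 1) ^ c ≤ S ^ c + c * (S + 1) ^ (c - 1) := by
  have h1 : (0:ℝ) < S + 1 := by linarith
  have hb := one_add_mul_self_le_rpow_one_add (s := -(1/(S+1)))
    (by rw [neg_le, neg_neg]; rw [div_le_one h1]; linarith) hc
  have he : (1 : ℝ) + -(1/(S+1)) = S / (S+1) := by field_simp; ring
  rw [he] at hb
  have hb2 : ((S/(S+1)) ^ c) * (S+1)^c ≥ (1 + c * -(1/(S+1))) * (S+1)^c := by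
    apply mul_le_mul_of_nonneg_right hb (Real.rpow_nonneg h1.le c)
  rw [← Real.mul_rpow (by positivity) h1.le, div_mul_cancel₀ _ h1.ne'] at hb2
  have hkey : (1 + c * -(1/(S+1))) * (S+1)^c = (S+1)^c - c * (S+1)^(c-1) := by
    have : (S+1) ^ (c-1) = (S+1)^c / (S+1) := by
      rw [Real.rpow_sub h1, Real.rpow_one]
    rw [this]; field_simp; ring
  rw [hkey] at hb2
  linarith

lemma aux_sum_real {c : ℝ} (hc : 1 ≤ c) (φ : ℕ → ℝ) (hφ : ∀ k, φ k = 0 ∨ φ k = 1) (n : ℕ) :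
    (∑ k ∈ Finset.range n, φ k) ^ c ≤ c * ∑ k ∈ Finset.range n, ((k:ℝ)+1) ^ (c-1) * φ k := by
  have hφ0 : ∀ k, 0 ≤ φ k := fun k => by rcases hφ k with h | h <;> simp [h]
  have hφ1 : ∀ k, φ k ≤ 1 := fun k => by rcases hφ k with h | h <;> simp [h]
  induction n with
  | zero => simp [Real.zero_rpow (by linarith : c ≠ 0)]
  | succ n ih =>
    have hS0 : 0 ≤ ∑ k ∈ Finset.range n, φ k := Finset.sum_nonneg fun k _ => hφ0 k
    have hSn : ∑ k ∈ Finset.range n, φ k ≤ n := by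
      calc ∑ k ∈ Finset.range n, φ k ≤ ∑ k ∈ Finset.range n, 1 :=
            Finset.sum_le_sum fun k _ => hφ1 k
        _ = n := by simp
    rw [Finset.sum_range_succ, Finset.sum_range_succ]
    rcases hφ n with h | h
    · rw [h]; simpa using ih
    · rw [h]
      have h2 : (∑ k ∈ Finset.range n, φ k + 1) ^ c
          ≤ (∑ k ∈ Finset.range n, φ k) ^ c + c * ((n:ℝ)+1) ^ (c-1) := by
        refine (aux_bern hc hS0).trans ?_
        have : (∑ k ∈ Finset.range n, φ k + 1) ^ (c-1) ≤ ((n:ℝ)+1) ^ (c-1) :=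
          Real.rpow_le_rpow (by linarith) (by push_cast; linarith) (by linarith)
        nlinarith [this, (by linarith : (0:ℝ) < c)]
      calc (∑ k ∈ Finset.range n, φ k + 1) ^ c
          ≤ (∑ k ∈ Finset.range n, φ k) ^ c + c * ((n:ℝ)+1) ^ (c-1) := h2
        _ ≤ c * ∑ k ∈ Finset.range n, ((k:ℝ)+1) ^ (c-1) * φ k + c * ((n:ℝ)+1) ^ (c-1) := by
            linarith [ih]
        _ = c * (∑ k ∈ Finset.range n, ((k:ℝ)+1) ^ (c-1) * φ k + ((n:ℝ)+1) ^ (c-1) * 1) := by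
            ring
open scoped ENNReal

lemma aux_tsum_ennreal {c : ℝ} (hc : 1 ≤ c) (χ : ℕ → ℝ≥0∞) (hχ : ∀ k, χ k = 0 ∨ χ k = 1) :
    (∑' k, χ k) ^ c ≤ ENNReal.ofReal c * ∑' k : ℕ, ENNReal.ofReal (((k:ℝ)+1) ^ (c-1)) * χ k := by
  set φ : ℕ → ℝ := fun k => (χ k).toReal with hφdef
  have hφ : ∀ k, φ k = 0 ∨ φ k = 1 := fun k => by
    rcases hχ k with h | h <;> simp [hφdef, h]
  have hφ0 : ∀ k, 0 ≤ φ k := fun k => by rcases hφ k with h | h <;> simp [h]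
  have hrel : ∀ k, χ k = ENNReal.ofReal (φ k) := fun k => by
    rcases hχ k with h | h <;> rcases hφ k with h' | h' <;> simp [h, h'] <;>
      simp [hφdef, h] at h'
  have hpart : ∀ n, ∑ k ∈ Finset.range n, χ k
      = ENNReal.ofReal (∑ k ∈ Finset.range n, φ k) := by
    intro n
    rw [ENNReal.ofReal_sum_of_nonneg fun k _ => hφ0 k]
    exact Finset.sum_congr rfl fun k _ => hrel k
  have hbound : ∀ n, (∑ k ∈ Finset.range n, χ k) ^ c
      ≤ ENNReal.ofReal c * ∑' k : ℕ, ENNReal.ofReal (((k:ℝ)+1) ^ (c-1)) * χ k := by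
    intro n
    rw [hpart, ENNReal.ofReal_rpow_of_nonneg (Finset.sum_nonneg fun k _ => hφ0 k)
      (by linarith)]
    calc ENNReal.ofReal ((∑ k ∈ Finset.range n, φ k) ^ c)
        ≤ ENNReal.ofReal (c * ∑ k ∈ Finset.range n, ((k:ℝ)+1) ^ (c-1) * φ k) :=
          ENNReal.ofReal_le_ofReal (aux_sum_real hc φ hφ n)
      _ = ENNReal.ofReal c * ∑ k ∈ Finset.range n, ENNReal.ofReal (((k:ℝ)+1) ^ (c-1)) * χ k := by
          rw [ENNReal.ofReal_mul (by linarith), ENNReal.ofReal_sum_of_nonneg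
            (fun k _ => mul_nonneg (Real.rpow_nonneg (by positivity) _) (hφ0 k))]
          congr 1
          refine Finset.sum_congr rfl fun k _ => ?_
          rw [ENNReal.ofReal_mul (Real.rpow_nonneg (by positivity) _), hrel k]
      _ ≤ ENNReal.ofReal c * ∑' k : ℕ, ENNReal.ofReal (((k:ℝ)+1) ^ (c-1)) * χ k := by
          exact mul_le_mul_right (ENNReal.sum_le_tsum _) _
  have htend : Filter.Tendsto (fun n => (∑ k ∈ Finset.range n, χ k) ^ c)
      Filter.atTop (nhds ((∑' k, χ k) ^ c)) :=
    (ENNReal.continuous_rpow_const.tendsto _).comp (ENNReal.tendsto_nat_tsum χ)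
  exact le_of_tendsto htend (Filter.Eventually.of_forall hbound)

theorem summable_quantile_integral_of_summable_coeffs
    {Ω : Type*} [MeasurableSpace Ω] (μ : Measure Ω) [IsProbabilityMeasure μ]
    (ε₀ : Ω → ℝ) (hε : Measurable ε₀)
    (r : ℝ) (hr : 2 < r) (hεLr : MemLp ε₀ (ENNReal.ofReal r) μ)
    (Q : ℝ → ℝ)
    (hQ : ∀ u, Q u = sInf {x : ℝ | 0 ≤ x ∧ (μ {ω | |ε₀ ω| > x}).toReal ≤ u})
    (a : ℕ → ℝ) (ha : ∀ k, 0 ≤ a k)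
    (hsum : Summable (fun k : ℕ => (k : ℝ) ^ (1 / (r - 1)) * (a k) ^ ((r - 2) / (r - 1)))) :
    Summable (fun k : ℕ => ∫ u in Ioo (0:ℝ) ((a k) ^ 2), Q u / Real.sqrt u) := by
  have hr1 : (1:ℝ) < r := by linarith
  have hr0 : (0:ℝ) < r - 1 := by linarith
  set q : ℝ := r / (r - 1) with hqdef
  have hq1 : 1 < q := (one_lt_div hr0).2 (by linarith)
  have hq2 : q < 2 := by rw [hqdef, div_lt_iff₀ hr0]; linarith
  have hpq : r.HolderConjugate q := Real.HolderConjugate.conjExponent hr1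
  set H : ℝ → ℝ := fun x => (μ {ω | |ε₀ ω| > x}).toReal with hHdef
  have hQeq : ∀ u, Q u = sInf {x : ℝ | 0 ≤ x ∧ H x ≤ u} := hQ
  have hBdd : ∀ u : ℝ, BddBelow {x : ℝ | 0 ≤ x ∧ H x ≤ u} := fun u => ⟨0, fun x hx => hx.1⟩
  have hQnonneg : ∀ u, 0 ≤ Q u := fun u => by
    rw [hQeq]; exact Real.sInf_nonneg fun x hx => hx.1
  have hQle : ∀ {t u : ℝ}, 0 ≤ t → H t ≤ u → Q u ≤ t := fun {t u} ht h => by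
    rw [hQeq]; exact csInf_le (hBdd u) ⟨ht, h⟩
  have hne : ∀ u : ℝ, 0 < u → {x : ℝ | 0 ≤ x ∧ H x ≤ u}.Nonempty := by
    intro u hu
    have hmeas : ∀ n : ℕ, NullMeasurableSet {ω | |ε₀ ω| > (n:ℝ)} μ :=
      fun n => (measurableSet_lt measurable_const hε.abs).nullMeasurableSet
    have hanti : Antitone fun n : ℕ => {ω | |ε₀ ω| > (n:ℝ)} := by
      intro m n hmn ω hω
      simp only [mem_setOf_eq] at hω ⊢
      exact lt_of_le_of_lt (Nat.cast_le.2 hmn) hω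
    have hint : (⋂ n : ℕ, {ω | |ε₀ ω| > (n:ℝ)}) = ∅ := by
      ext ω; simp only [mem_iInter, mem_setOf_eq, mem_empty_iff_false, iff_false]
      intro hω
      obtain ⟨n, hn⟩ := exists_nat_ge (|ε₀ ω|)
      exact absurd (hω n) (not_lt.2 hn)
    have htd : Filter.Tendsto (fun n : ℕ => μ {ω | |ε₀ ω| > (n:ℝ)}) Filter.atTop (nhds 0) := by
      have h0 := tendsto_measure_iInter_atTop hmeas hanti ⟨0, measure_ne_top μ _⟩
      rw [hint, measure_empty] at h0
      exact h0
    have htd' : Filter.Tendsto (fun n : ℕ => H (n:ℝ)) Filter.atTop (nhds 0) := by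
      have h2 := (ENNReal.tendsto_toReal (a := 0) (by simp)).comp htd
      exact h2
    obtain ⟨n, hn⟩ := (Filter.Tendsto.eventually_lt_const hu htd').exists
    exact ⟨n, ⟨Nat.cast_nonneg n, hn.le⟩⟩
  have hanti : AntitoneOn Q (Ioi (0:ℝ)) := by
    intro u hu v hv huv
    rw [hQeq, hQeq]
    exact csInf_le_csInf (hBdd v) (hne u hu) fun x hx => ⟨hx.1, hx.2.trans huv⟩
  have hQae : AEMeasurable Q (volume.restrict (Ioi (0:ℝ))) :=
    aemeasurable_restrict_of_antitoneOn measurableSet_Ioi hanti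
  set f : ℝ → ℝ≥0∞ := fun u => ENNReal.ofReal (Q u / Real.sqrt u) with hfdef
  set G0 : ℝ → ℝ≥0∞ := fun u => ENNReal.ofReal (Real.sqrt u)⁻¹ with hG0def
  set N : ℝ → ℝ≥0∞ :=
    fun u => ∑' k : ℕ, (Ioo (0:ℝ) (a k ^ 2)).indicator (fun _ => (1:ℝ≥0∞)) u with hNdef
  have hN_meas : Measurable N :=
    Measurable.ennreal_tsum fun k => measurable_const.indicator measurableSet_Ioo
  have hG0_meas : Measurable G0 :=
    (Real.continuous_sqrt.measurable.inv).ennreal_ofReal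
  have hsqrt_ae : AEMeasurable Real.sqrt (volume.restrict (Ioi (0:ℝ))) :=
    Real.continuous_sqrt.measurable.aemeasurable
  have hf_ae : AEMeasurable f (volume.restrict (Ioi (0:ℝ))) :=
    (hQae.div hsqrt_ae).ennreal_ofReal
  have hF_ae : AEMeasurable (fun u => ENNReal.ofReal (Q u)) (volume.restrict (Ioi (0:ℝ))) :=
    hQae.ennreal_ofReal
  -- Step 1 : rewrite the sum of lintegrals as one lintegral against N
  have h_each : ∀ k : ℕ, ∫⁻ u in Ioo (0:ℝ) (a k ^ 2), f u
      = ∫⁻ u in Ioi (0:ℝ), (Ioo (0:ℝ) (a k ^ 2)).indicator f u := by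
    intro k
    rw [lintegral_indicator measurableSet_Ioo, Measure.restrict_restrict measurableSet_Ioo,
      inter_eq_self_of_subset_left Ioo_subset_Ioi_self]
  have hL1 : ∑' k : ℕ, ∫⁻ u in Ioo (0:ℝ) (a k ^ 2), f u
      = ∫⁻ u in Ioi (0:ℝ), f u * N u := by
    simp_rw [h_each]
    rw [← lintegral_tsum fun k => (hf_ae.indicator measurableSet_Ioo)]
    refine lintegral_congr fun u => ?_
    have hik : ∀ k : ℕ, (Ioo (0:ℝ) (a k ^ 2)).indicator f u
        = f u * (Ioo (0:ℝ) (a k ^ 2)).indicator (fun _ => (1:ℝ≥0∞)) u := by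
      intro k
      by_cases h : u ∈ Ioo (0:ℝ) (a k ^ 2) <;> simp [h]
    rw [tsum_congr hik, ENNReal.tsum_mul_left]
  have hG_ae : AEMeasurable (fun u => G0 u * N u) (volume.restrict (Ioi (0:ℝ))) :=
    (hG0_meas.mul hN_meas).aemeasurable
  have hprod : ∀ u, f u * N u
      = ((fun u => ENNReal.ofReal (Q u)) * fun u => G0 u * N u) u := by
    intro u
    simp only [Pi.mul_apply, hfdef, hG0def]
    rw [div_eq_mul_inv, ENNReal.ofReal_mul (hQnonneg u), mul_assoc]
  have hholder : ∫⁻ u in Ioi (0:ℝ), f u * N u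
      ≤ (∫⁻ u in Ioi (0:ℝ), ENNReal.ofReal (Q u) ^ r) ^ (1/r)
        * (∫⁻ u in Ioi (0:ℝ), (G0 u * N u) ^ q) ^ (1/q) := by
    calc ∫⁻ u in Ioi (0:ℝ), f u * N u
        = ∫⁻ u in Ioi (0:ℝ), ((fun u => ENNReal.ofReal (Q u)) * fun u => G0 u * N u) u :=
          lintegral_congr hprod
      _ ≤ _ := ENNReal.lintegral_mul_le_Lp_mul_Lq _ hpq hF_ae hG_ae
  -- Step A : first Hölder factor is finite
  have hA : ∫⁻ u in Ioi (0:ℝ), ENNReal.ofReal (Q u) ^ r < ⊤ := by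
    have hrw : ∀ u : ℝ, ENNReal.ofReal (Q u) ^ r = ENNReal.ofReal (Q u ^ r) := fun u =>
      ENNReal.ofReal_rpow_of_nonneg (hQnonneg u) (by linarith)
    simp_rw [hrw]
    rw [lintegral_rpow_eq_lintegral_meas_lt_mul _ (Filter.Eventually.of_forall hQnonneg) hQae
      (by linarith : (0:ℝ) < r)]
    have hε_eq : ∫⁻ ω, ENNReal.ofReal (|ε₀ ω| ^ r) ∂μ
        = ENNReal.ofReal r * ∫⁻ t in Ioi (0:ℝ), μ {ω | t < |ε₀ ω|} * ENNReal.ofReal (t ^ (r-1)) :=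
      lintegral_rpow_eq_lintegral_meas_lt_mul μ
        (Filter.Eventually.of_forall fun ω => abs_nonneg _) hε.abs.aemeasurable (by linarith)
    have hεfin : ∫⁻ ω, ENNReal.ofReal (|ε₀ ω| ^ r) ∂μ < ⊤ := by
      have h1 := hεLr.2
      rw [eLpNorm_eq_lintegral_rpow_enorm_toReal (by simp [hr1, (by linarith : (0:ℝ) < r)])
        ENNReal.ofReal_ne_top, ENNReal.toReal_ofReal (by linarith : (0:ℝ) ≤ r)] at h1
      have h2 : ∫⁻ x, ‖ε₀ x‖ₑ ^ r ∂μ ≠ ⊤ := by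
        intro hcon
        rw [hcon, ENNReal.top_rpow_of_pos (by positivity)] at h1
        exact lt_irrefl _ h1
      have h3 : ∀ ω, ENNReal.ofReal (|ε₀ ω| ^ r) = ‖ε₀ ω‖ₑ ^ r := fun ω => by
        rw [Real.enorm_eq_ofReal_abs, ENNReal.ofReal_rpow_of_nonneg (abs_nonneg _)
          (by linarith : (0:ℝ) ≤ r)]
      simp_rw [h3]
      exact lt_of_le_of_ne le_top h2
    rw [hε_eq] at hεfin
    refine lt_of_le_of_lt (mul_le_mul_right ?_ _) hεfin
    refine lintegral_mono_ae ?_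
    rw [ae_restrict_iff' measurableSet_Ioi]
    refine Filter.Eventually.of_forall fun t ht => ?_
    refine mul_le_mul_left ?_ _
    rw [Measure.restrict_apply' measurableSet_Ioi]
    have hsub : {u : ℝ | t < Q u} ∩ Ioi 0 ⊆ Ioo 0 (H t) := by
      rintro u ⟨h1u, h2u⟩
      refine ⟨h2u, ?_⟩
      by_contra hcon
      exact absurd (hQle (le_of_lt ht) (not_lt.1 hcon)) (not_le.2 h1u)
    refine le_trans (measure_mono hsub) ?_
    rw [Real.volume_Ioo, sub_zero]
    rw [hHdef]
    exact le_of_eq (ENNReal.ofReal_toReal (measure_ne_top μ _))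
  -- Step B : second Hölder factor is finite
  set s : ℝ := -(q/2) with hsdef
  have hs1 : (-1:ℝ) < s := by rw [hsdef]; linarith
  have hs0 : (0:ℝ) < s + 1 := by rw [hsdef]; linarith
  set β : ℝ := (r-2)/(r-1) with hβdef
  have hG0q : ∀ u ∈ Ioi (0:ℝ), G0 u ^ q = ENNReal.ofReal (u ^ s) := by
    intro u hu
    have hu0 : (0:ℝ) < u := hu
    simp only [hG0def]
    rw [Real.sqrt_eq_rpow, ← Real.rpow_neg hu0.le,
      ENNReal.ofReal_rpow_of_nonneg (Real.rpow_nonneg hu0.le _) (by linarith : (0:ℝ) ≤ q),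
      ← Real.rpow_mul hu0.le]
    congr 1
    rw [hsdef]; ring
  set D : ℕ → ℝ → ℝ≥0∞ := fun k => (Ioo (0:ℝ) (a k ^ 2)).indicator (fun v => G0 v ^ q)
    with hDdef
  have hDmeas : ∀ k : ℕ, Measurable (D k) := fun k =>
    ((ENNReal.continuous_rpow_const.measurable).comp hG0_meas).indicator measurableSet_Ioo
  have hJ : ∀ k : ℕ, ∫⁻ u in Ioi (0:ℝ), D k u
      ≤ ENNReal.ofReal ((s+1)⁻¹ * a k ^ β) := by
    intro k
    have hc : (0:ℝ) ≤ a k ^ 2 := sq_nonneg _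
    rw [hDdef]
    rw [lintegral_indicator measurableSet_Ioo, Measure.restrict_restrict measurableSet_Ioo,
      inter_eq_self_of_subset_left Ioo_subset_Ioi_self]
    have step1 : ∫⁻ u in Ioo (0:ℝ) (a k ^ 2), G0 u ^ q
        = ∫⁻ u in Ioo (0:ℝ) (a k ^ 2), ENNReal.ofReal (u ^ s) :=
      setLIntegral_congr_fun measurableSet_Ioo
        (fun u hu => hG0q u hu.1)
    rw [step1]
    have hint : IntegrableOn (fun u : ℝ => u ^ s) (Ioc 0 (a k ^ 2)) volume := by
      have h4 := intervalIntegral.intervalIntegrable_rpow' (a := 0) (b := a k ^ 2) hs1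
      rwa [intervalIntegrable_iff, uIoc_of_le hc] at h4
    have step2 : ∫⁻ u in Ioo (0:ℝ) (a k ^ 2), ENNReal.ofReal (u ^ s)
        ≤ ∫⁻ u in Ioc (0:ℝ) (a k ^ 2), ENNReal.ofReal (u ^ s) :=
      lintegral_mono_set Ioo_subset_Ioc_self
    have step3 : ∫⁻ u in Ioc (0:ℝ) (a k ^ 2), ENNReal.ofReal (u ^ s)
        = ENNReal.ofReal (∫ u in Ioc (0:ℝ) (a k ^ 2), u ^ s) := by
      rw [← ofReal_integral_eq_lintegral_ofReal hint]
      refine (ae_restrict_iff' measurableSet_Ioc).2 (Filter.Eventually.of_forall fun u hu =>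
        Real.rpow_nonneg hu.1.le _)
    have hval : ∫ u in Ioc (0:ℝ) (a k ^ 2), u ^ s = (s+1)⁻¹ * (a k ^ 2) ^ (s+1) := by
      rw [← intervalIntegral.integral_of_le hc, integral_rpow (Or.inl hs1),
        Real.zero_rpow (by linarith : s + 1 ≠ 0)]
      field_simp; simp
    have hpow : ((a k ^ 2 : ℝ)) ^ (s+1) = a k ^ β := by
      rw [← Real.rpow_natCast (a k) 2, ← Real.rpow_mul (ha k)]
      congr 1
      rw [hβdef, hsdef, hqdef]
      push_cast
      field_simp
      ring
    refine le_trans step2 (le_of_eq ?_)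
    rw [step3, hval, hpow]
  have haux : ∀ u : ℝ, N u ^ q ≤ ENNReal.ofReal q
      * ∑' k : ℕ, ENNReal.ofReal (((k:ℝ)+1)^(q-1))
        * (Ioo (0:ℝ) (a k ^ 2)).indicator (fun _ => (1:ℝ≥0∞)) u := by
    intro u
    exact aux_tsum_ennreal hq1.le _
      (fun k => by by_cases h : u ∈ Ioo (0:ℝ) (a k ^ 2) <;> simp [h])
  have hptw : ∀ u : ℝ, (G0 u * N u) ^ q
      ≤ ENNReal.ofReal q * ∑' k : ℕ, ENNReal.ofReal (((k:ℝ)+1)^(q-1)) * D k u := by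
    intro u
    rw [ENNReal.mul_rpow_of_nonneg _ _ (by linarith : (0:ℝ) ≤ q)]
    calc G0 u ^ q * N u ^ q
        ≤ G0 u ^ q * (ENNReal.ofReal q
          * ∑' k : ℕ, ENNReal.ofReal (((k:ℝ)+1)^(q-1))
            * (Ioo (0:ℝ) (a k ^ 2)).indicator (fun _ => (1:ℝ≥0∞)) u) :=
          mul_le_mul_right (haux u) _
      _ = ENNReal.ofReal q * ∑' k : ℕ, ENNReal.ofReal (((k:ℝ)+1)^(q-1)) * D k u := by
          rw [← mul_assoc, mul_comm (G0 u ^ q), mul_assoc]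
          congr 1
          rw [← ENNReal.tsum_mul_left]
          refine tsum_congr fun k => ?_
          rw [← mul_assoc, mul_comm (G0 u ^ q), mul_assoc]
          congr 1
          by_cases h : u ∈ Ioo (0:ℝ) (a k ^ 2) <;> simp [hDdef, h]
  have hB : ∫⁻ u in Ioi (0:ℝ), (G0 u * N u) ^ q < ⊤ := by
    have hbd : ∫⁻ u in Ioi (0:ℝ), (G0 u * N u) ^ q
        ≤ ENNReal.ofReal q * ∑' k : ℕ, ENNReal.ofReal (((k:ℝ)+1)^(q-1))
          * ∫⁻ u in Ioi (0:ℝ), D k u := by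
      calc ∫⁻ u in Ioi (0:ℝ), (G0 u * N u) ^ q
          ≤ ∫⁻ u in Ioi (0:ℝ), ENNReal.ofReal q
            * ∑' k : ℕ, ENNReal.ofReal (((k:ℝ)+1)^(q-1)) * D k u := lintegral_mono hptw
        _ = ENNReal.ofReal q * ∫⁻ u in Ioi (0:ℝ),
            ∑' k : ℕ, ENNReal.ofReal (((k:ℝ)+1)^(q-1)) * D k u :=
            lintegral_const_mul' _ _ ENNReal.ofReal_ne_top
        _ = ENNReal.ofReal q * ∑' k : ℕ, ∫⁻ u in Ioi (0:ℝ),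
            ENNReal.ofReal (((k:ℝ)+1)^(q-1)) * D k u := by
            rw [lintegral_tsum fun k => ((hDmeas k).const_mul _).aemeasurable]
        _ = ENNReal.ofReal q * ∑' k : ℕ, ENNReal.ofReal (((k:ℝ)+1)^(q-1))
            * ∫⁻ u in Ioi (0:ℝ), D k u := by
            congr 1
            exact tsum_congr fun k => lintegral_const_mul' _ _ ENNReal.ofReal_ne_top
    set g : ℕ → ℝ := fun k => (s+1)⁻¹ * (((k:ℝ)+1)^(q-1) * a k ^ β) with hgdef
    have hg0 : ∀ k, 0 ≤ g k := fun k =>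
      mul_nonneg (inv_nonneg.2 hs0.le)
        (mul_nonneg (Real.rpow_nonneg (by positivity) _) (Real.rpow_nonneg (ha k) _))
    have hq_sub : q - 1 = 1/(r-1) := by
      rw [hqdef]; field_simp; ring
    have h1 : Summable (fun k : ℕ => ((k:ℝ)+1) ^ (q-1) * a k ^ β) := by
      rw [← summable_nat_add_iff 1]
      have hmaj : Summable (fun n : ℕ =>
          (2:ℝ)^(q-1) * (((n+1:ℕ):ℝ) ^ (1/(r-1)) * a (n+1) ^ β)) :=
        ((summable_nat_add_iff 1).2 hsum).mul_left _
      refine Summable.of_nonneg_of_le (fun n => ?_) (fun n => ?_) hmaj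
      · exact mul_nonneg (Real.rpow_nonneg (by positivity) _) (Real.rpow_nonneg (ha _) _)
      · have hle : (((n+1:ℕ):ℝ)+1) ^ (q-1) ≤ (2:ℝ)^(q-1) * ((n+1:ℕ):ℝ) ^ (q-1) := by
          rw [← Real.mul_rpow (by norm_num) (by positivity)]
          refine Real.rpow_le_rpow (by positivity) (by push_cast; linarith) (by linarith)
        calc (((n+1:ℕ):ℝ)+1) ^ (q-1) * a (n+1) ^ β
            ≤ ((2:ℝ)^(q-1) * ((n+1:ℕ):ℝ) ^ (q-1)) * a (n+1) ^ β :=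
              mul_le_mul_of_nonneg_right hle (Real.rpow_nonneg (ha _) _)
          _ = (2:ℝ)^(q-1) * (((n+1:ℕ):ℝ) ^ (1/(r-1)) * a (n+1) ^ β) := by
              rw [hq_sub]; ring
    have hsum' : Summable g := (h1.mul_left _)
    have hterm : ∀ k : ℕ, ENNReal.ofReal (((k:ℝ)+1)^(q-1))
        * ENNReal.ofReal ((s+1)⁻¹ * a k ^ β) = ENNReal.ofReal (g k) := fun k => by
      rw [← ENNReal.ofReal_mul (Real.rpow_nonneg (by positivity) _), hgdef]
      congr 1
      ring
    have hfin2 : ∑' k : ℕ, ENNReal.ofReal (((k:ℝ)+1)^(q-1))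
        * ENNReal.ofReal ((s+1)⁻¹ * a k ^ β) ≠ ⊤ := by
      simp_rw [hterm]
      rw [← ENNReal.ofReal_tsum_of_nonneg hg0 hsum']
      exact ENNReal.ofReal_ne_top
    refine lt_of_le_of_lt hbd ?_
    refine ENNReal.mul_lt_top ENNReal.ofReal_lt_top ?_
    refine lt_of_le_of_ne ?_ ?_
    · exact le_top
    · intro hcon
      apply hfin2
      refine eq_top_iff.2 ?_
      rw [← hcon]
      exact ENNReal.tsum_le_tsum fun k => mul_le_mul_right (hJ k) _
  -- put everything together
  have hLfin : ∑' k : ℕ, ∫⁻ u in Ioo (0:ℝ) (a k ^ 2), f u ≠ ⊤ := by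
    rw [hL1]
    refine ne_top_of_le_ne_top ?_ hholder
    exact (ENNReal.mul_lt_top (ENNReal.rpow_lt_top_of_nonneg (by positivity) hA.ne)
      (ENNReal.rpow_lt_top_of_nonneg (by positivity) hB.ne)).ne
  have heq : ∀ k : ℕ, ∫ u in Ioo (0:ℝ) (a k ^ 2), Q u / Real.sqrt u
      = (∫⁻ u in Ioo (0:ℝ) (a k ^ 2), f u).toReal := by
    intro k
    rw [integral_eq_lintegral_of_nonneg_ae
      (Filter.Eventually.of_forall fun u => div_nonneg (hQnonneg u) (Real.sqrt_nonneg u))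
      ((hQae.mono_measure (Measure.restrict_mono Ioo_subset_Ioi_self le_rfl)).div
        (Real.continuous_sqrt.measurable.aemeasurable)).aestronglyMeasurable]
  have hfinal := ENNReal.summable_toReal hLfin
  simp_rw [heq]
  exact hfinal
end
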